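/- Let (K, δ) be a differential field of characteristic 0 and let K(X) be the field of rational functions in the entries of an n×n matrix X of indeterminates, with the derivation extending δ determined by δ(X) = A·X entrywise, for a fixed matrix A ∈ Mat_n(K). Then X ∈ GL_n(K(X)) and δ(X) = A·X, i.e., every linear matrix differential equation δZ = AZ has a fundamental (invertible) solution in some differential field extension of K. -/

import Mathlib

universe u v

open scoped nonZeroDivisors



variable {R : Type u} [CommRing R] [IsDomain R]

namespace FracDer

noncomputable abbrev L (R : Type u) [CommRing R] [IsDomain R] := FractionRing R

noncomputable def a : R →+* FractionRing R := algebraMap R (FractionRing R)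

lemma a_inj : Function.Injective (a (R := R)) := IsFractionRing.injective R (FractionRing R)

lemma a_ne_zero {q : R} (hq : q ≠ 0) : a q ≠ (0 : FractionRing R) := by
  simpa using fun h => hq (a_inj (by simpa using h))

/-- the candidate derivative on the fraction field -/
noncomputable def der (D : Derivation ℤ R R) (x : FractionRing R) : FractionRing R :=
  (a (D (IsLocalization.sec R⁰ x).1) - x * a (D ((IsLocalization.sec R⁰ x).2 : R))) /
    a ((IsLocalization.sec R⁰ x).2 : R)

lemma der_spec (D : Derivation ℤ R R) (x : FractionRing R) (p q : R) (hq : q ≠ 0)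
    (h : x * a q = a p) :
    der D x = (a (D p) - x * a (D q)) / a q := by
  set s := IsLocalization.sec R⁰ x with hs
  have hs2 : (s.2 : R) ≠ 0 := nonZeroDivisors.coe_ne_zero s.2
  have hxs : x * a (s.2 : R) = a s.1 := by
    have := IsLocalization.sec_spec' R⁰ x
    rw [mul_comm] at this
    exact this.symm
  -- cross relation
  have hcross : s.1 * q = p * (s.2 : R) := by
    apply a_inj
    rw [map_mul, map_mul, ← hxs, ← h]; ring
  have hD := congrArg (a (R := R)) (congrArg D hcross)
  rw [D.leibniz, D.leibniz] at hD
  simp only [map_add, map_mul, smul_eq_mul] at hD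
  rw [der, ← hs]
  rw [div_eq_div_iff (a_ne_zero hs2) (a_ne_zero hq)]
  have h1 : a s.1 = x * a (s.2 : R) := hxs.symm
  have h2 : a p = x * a q := h.symm
  -- hD : a s.1 * a (D q) + a q * a (D s.1) = a p * a (D s.2) + a s.2 * a (D p)
  rw [h1, h2] at hD
  linear_combination hD


lemma rep (x : FractionRing R) : ∃ p q : R, q ≠ 0 ∧ x * a q = a p := by
  obtain ⟨⟨p, q⟩, h⟩ := IsLocalization.surj R⁰ x
  exact ⟨p, q, nonZeroDivisors.coe_ne_zero q, h⟩

lemma der_add (D : Derivation ℤ R R) (x y : FractionRing R) :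
    der D (x + y) = der D x + der D y := by
  obtain ⟨p, q, hq, h⟩ := rep x
  obtain ⟨p', q', hq', h'⟩ := rep y
  have hqq' : q * q' ≠ 0 := mul_ne_zero hq hq'
  have hsum : (x + y) * a (q * q') = a (p * q' + p' * q) := by
    rw [map_mul, map_add, map_mul, map_mul, ← h, ← h']; ring
  rw [der_spec D x p q hq h, der_spec D y p' q' hq' h', der_spec D (x + y) _ _ hqq' hsum]
  have ha1 := a_ne_zero hq
  have ha2 := a_ne_zero hq'
  simp only [map_add, map_mul, Derivation.leibniz, smul_eq_mul]
  rw [← h, ← h']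
  field_simp
  ring

lemma der_mul (D : Derivation ℤ R R) (x y : FractionRing R) :
    der D (x * y) = x * der D y + y * der D x := by
  obtain ⟨p, q, hq, h⟩ := rep x
  obtain ⟨p', q', hq', h'⟩ := rep y
  have hqq' : q * q' ≠ 0 := mul_ne_zero hq hq'
  have hmul : (x * y) * a (q * q') = a (p * p') := by
    rw [map_mul, map_mul, ← h, ← h']; ring
  rw [der_spec D x p q hq h, der_spec D y p' q' hq' h', der_spec D (x * y) _ _ hqq' hmul]
  have ha1 := a_ne_zero hq
  have ha2 := a_ne_zero hq'
  simp only [map_add, map_mul, Derivation.leibniz, smul_eq_mul]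
  rw [← h, ← h']
  field_simp
  ring

lemma der_algebraMap (D : Derivation ℤ R R) (r : R) : der D (a r) = a (D r) := by
  have h : a r * a (1 : R) = a r := by rw [map_one, mul_one]
  rw [der_spec D (a r) r 1 one_ne_zero h]
  simp

/-- Extension of a derivation to the fraction field. -/
lemma der_intCast_mul (D : Derivation ℤ R R) (m : ℤ) (x : FractionRing R) :
    der D ((m : FractionRing R) * x) = (m : FractionRing R) * der D x := by
  have hm : der D ((m : FractionRing R)) = 0 := by
    have h2 : a ((m : ℤ) : R) = ((m : ℤ) : FractionRing R) := map_intCast _ m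
    rw [← h2, der_algebraMap, Derivation.map_intCast, map_zero]
  rw [der_mul, hm, mul_zero, add_zero]

/-- Extension of a derivation to the fraction field. -/
noncomputable def fracDerivation (D : Derivation ℤ R R) :
    Derivation ℤ (FractionRing R) (FractionRing R) :=
  Derivation.mk
    (@LinearMap.mk ℤ ℤ _ _ (RingHom.id ℤ) (FractionRing R) (FractionRing R) _ _
      Algebra.toModule _ (AddHom.mk (der D) (der_add D))
      (by
        intro m x
        simp only [RingHom.id_apply]
        rw [Algebra.smul_def, eq_intCast (algebraMap ℤ (FractionRing R)) m, der_intCast_mul, zsmul_eq_mul]))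
    (by
      show der D 1 = 0
      have : der D (a (1 : R)) = a (D 1) := der_algebraMap D 1
      simpa using this)
    (by
      intro x y
      show der D (x * y) = x • der D y + y • der D x
      simpa [smul_eq_mul] using der_mul D x y)

@[simp] lemma fracDerivation_algebraMap (D : Derivation ℤ R R) (r : R) :
    fracDerivation D (algebraMap R (FractionRing R) r) = algebraMap R (FractionRing R) (D r) :=
  der_algebraMap D r

end FracDer

/-- Build an integer derivation on a commutative ring from a function satisfying
additivity and the Leibniz rule. -/
noncomputable def mkDerInt {A : Type*} [CommRing A] (f : A → A)
    (hadd : ∀ x y, f (x + y) = f x + f y)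
    (hmul : ∀ x y, f (x * y) = x * f y + y * f x)
    (hone : f 1 = 0) : Derivation ℤ A A :=
  Derivation.mk
    (@LinearMap.mk ℤ ℤ _ _ (RingHom.id ℤ) A A _ _ Algebra.toModule _
      (AddHom.mk f hadd)
      (by
        intro m x
        simp only [RingHom.id_apply]
        have hint : f ((m : A)) = 0 := by
          have h1 : ((m : A)) = m • (1 : A) := by rw [zsmul_eq_mul, mul_one]
          have h2 := (AddMonoidHom.mk' f hadd).map_zsmul m (1 : A)
          simp only [AddMonoidHom.mk'_apply] at h2
          rw [h1, h2, hone, smul_zero]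
        rw [Algebra.smul_def, eq_intCast (algebraMap ℤ A) m, hmul, hint, mul_zero, add_zero,
          zsmul_eq_mul]))
    hone
    (by
      intro x y
      show f (x * y) = x • f y + y • f x
      simpa [smul_eq_mul] using hmul x y)

@[simp] lemma mkDerInt_apply {A : Type*} [CommRing A] (f : A → A) (hadd hmul hone) (x : A) :
    mkDerInt f hadd hmul hone x = f x := rfl




variable {K : Type u} [CommRing K] {σ : Type v}

open MvPolynomial

namespace PolyDer

/-- coefficientwise application of δ, as a ℤ-linear map -/
noncomputable def l2 (δ : Derivation ℤ K K) : MvPolynomial σ K →ₗ[ℤ] MvPolynomial σ K :=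
  (Finsupp.lsum ℤ fun s =>
    (((MvPolynomial.monomial (R := K) s)).restrictScalars ℤ).comp δ.toLinearMap) ∘ₗ
    (AddMonoidAlgebra.coeffLinearEquiv ℤ).toLinearMap

@[simp] lemma l2_monomial (δ : Derivation ℤ K K) (s : σ →₀ ℕ) (c : K) :
    l2 δ (monomial s c) = monomial s (δ c) := by
  have : AddMonoidAlgebra.coeff (monomial s c : MvPolynomial σ K) = Finsupp.single s c := rfl
  rw [l2, LinearMap.comp_apply]
  change (Finsupp.lsum ℤ fun s =>
    (((MvPolynomial.monomial (R := K) s)).restrictScalars ℤ).comp δ.toLinearMap)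
    (Finsupp.single s c) = _
  exact Finsupp.sum_single_index (by simp)

lemma l2_leibniz (δ : Derivation ℤ K K) (p q : MvPolynomial σ K) :
    l2 δ (p * q) = p * l2 δ q + q * l2 δ p := by
  induction p using MvPolynomial.induction_on' with
  | add p p' hp hp' => simp only [add_mul, map_add, hp, hp']; ring
  | monomial s a =>
    induction q using MvPolynomial.induction_on' with
    | add q q' hq hq' => simp only [mul_add, map_add, hq, hq']; ring
    | monomial t b =>
      rw [monomial_mul, l2_monomial, Derivation.leibniz, smul_eq_mul, smul_eq_mul, map_add,
        l2_monomial, l2_monomial, monomial_mul, monomial_mul]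
      rw [mul_comm b (δ a), add_comm t s]


variable (δ : Derivation ℤ K K) (v : σ → MvPolynomial σ K)

/-- the underlying function of the derivation on the polynomial ring -/
noncomputable def F (p : MvPolynomial σ K) : MvPolynomial σ K :=
  MvPolynomial.mkDerivation K v p + l2 δ p

lemma F_add (p q : MvPolynomial σ K) : F δ v (p + q) = F δ v p + F δ v q := by
  simp only [F, map_add]; ring

lemma F_leibniz (p q : MvPolynomial σ K) :
    F δ v (p * q) = p * F δ v q + q * F δ v p := by
  have h := (MvPolynomial.mkDerivation K v).leibniz p q
  simp only [smul_eq_mul] at h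
  simp only [F, h, l2_leibniz]
  ring

lemma F_C (a : K) : F δ v (MvPolynomial.C a) = MvPolynomial.C (δ a) := by
  have h1 : MvPolynomial.mkDerivation K v (MvPolynomial.C a) = 0 := by
    have : (MvPolynomial.C a : MvPolynomial σ K) = algebraMap K _ a := rfl
    rw [this, Derivation.map_algebraMap]
  have h2 : l2 δ (MvPolynomial.C (σ := σ) a) = MvPolynomial.C (δ a) := by
    rw [MvPolynomial.C_apply, l2_monomial, MvPolynomial.C_apply]
  rw [F, h1, h2, zero_add]

lemma F_X (i : σ) : F δ v (MvPolynomial.X i) = v i := by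
  have h2 : l2 δ (MvPolynomial.X (R := K) i) = 0 := by
    rw [MvPolynomial.X, l2_monomial]
    simp
  rw [F, h2, add_zero, MvPolynomial.mkDerivation_X]

/-- the derivation on the polynomial ring extending `δ` with prescribed values on variables -/
noncomputable def polyDer : Derivation ℤ (MvPolynomial σ K) (MvPolynomial σ K) :=
  Derivation.mk
    (@LinearMap.mk ℤ ℤ _ _ (RingHom.id ℤ) (MvPolynomial σ K) (MvPolynomial σ K) _ _
      Algebra.toModule _ (AddHom.mk (F δ v) (F_add δ v))
      (by
        intro m p
        simp only [RingHom.id_apply]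
        rw [Algebra.smul_def, eq_intCast (algebraMap ℤ (MvPolynomial σ K)) m]
        have hm : F δ v ((m : MvPolynomial σ K)) = 0 := by
          have : ((m : MvPolynomial σ K)) = MvPolynomial.C ((m : K)) := by
            rw [map_intCast]
          rw [this, F_C, Derivation.map_intCast, map_zero]
        rw [F_leibniz, hm, mul_zero, add_zero, zsmul_eq_mul]))
    (by
      show F δ v 1 = 0
      have : (1 : MvPolynomial σ K) = MvPolynomial.C 1 := by simp
      rw [this, F_C, Derivation.map_one_eq_zero, map_zero])
    (by
      intro p q
      show F δ v (p * q) = p • F δ v q + q • F δ v p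
      simpa [smul_eq_mul] using F_leibniz δ v p q)

@[simp] lemma polyDer_apply (p : MvPolynomial σ K) : polyDer δ v p = F δ v p := rfl

end PolyDer

open PolyDer FracDer in
/-- Every linear matrix differential equation `δZ = A·Z` over a differential field
`(K, δ)` of characteristic 0 has a fundamental (invertible) solution in some
differential field extension of `K` (e.g. the rational function field `K(X)` in the
entries of a matrix of indeterminates, with `δX = A·X`). -/
theorem fundamental_solution_exists {K : Type u} [Field K] [CharZero K]
    (δ : Derivation ℤ K K) (n : ℕ) (A : Matrix (Fin n) (Fin n) K) :
    ∃ (L : Type u) (_ : Field L) (_ : Algebra K L) (d : Derivation ℤ L L),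
      (∀ a : K, d (algebraMap K L a) = algebraMap K L (δ a)) ∧
      ∃ Z : Matrix (Fin n) (Fin n) L, IsUnit Z.det ∧
        ∀ i j, d (Z i j) = (A.map (algebraMap K L) * Z) i j := by
  classical
  set σ := (Fin n × Fin n)
  set R := MvPolynomial σ K with hR
  set L := FractionRing R with hL
  set v : σ → R := fun ij => ∑ k, MvPolynomial.C (A ij.1 k) * MvPolynomial.X (k, ij.2) with hv
  set D : Derivation ℤ R R := polyDer δ v with hD
  set d :=
    mkDerInt (der D) (der_add D) (der_mul D)
      (by
        have : der D (a (1 : R)) = a (D 1) := der_algebraMap D 1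
        simpa using this) with hd
  letI : Algebra K L := ((algebraMap R L).comp (MvPolynomial.C : K →+* R)).toAlgebra
  have hKL : ∀ a : K, algebraMap K L a = algebraMap R L (MvPolynomial.C a) := fun a => rfl
  refine ⟨L, inferInstance, inferInstance, d, ?_, ?_⟩
  · intro a
    rw [hKL, hKL]
    have h := der_algebraMap (R := R) D (MvPolynomial.C a)
    have h2 : D (MvPolynomial.C a) = MvPolynomial.C (δ a) := F_C δ v a
    erw [h2] at h
    exact h
  · set Xmat : Matrix (Fin n) (Fin n) R := fun i j => MvPolynomial.X (i, j) with hX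
    set Z : Matrix (Fin n) (Fin n) L := Xmat.map (algebraMap R L) with hZ
    have hdet : Z.det = algebraMap R L Xmat.det := (RingHom.map_det (algebraMap R L) Xmat).symm
    refine ⟨Z, ?_, ?_⟩
    · rw [hdet, isUnit_iff_ne_zero]
      intro h0
      have hinj : Function.Injective (algebraMap R L) := IsFractionRing.injective R L
      have hXdet : Xmat.det = 0 := by
        apply hinj; rw [h0, map_zero]
      set φ : R →+* K := (MvPolynomial.eval fun p : σ => if p.1 = p.2 then (1 : K) else 0)
      have h1 : Xmat.map φ = (1 : Matrix (Fin n) (Fin n) K) := by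
        ext i j
        show φ (Xmat i j) = _
        rw [hX]
        simp only [φ]
        rw [MvPolynomial.eval_X]
        by_cases hij : i = j <;> simp [Matrix.one_apply, hij]
      have h2 : φ Xmat.det = 1 := by
        rw [RingHom.map_det φ Xmat, RingHom.mapMatrix_apply, h1, Matrix.det_one]

      rw [hXdet, map_zero] at h2
      exact zero_ne_one h2
    · intro i j
      have hx : D (MvPolynomial.X (i, j)) = v (i, j) := F_X δ v (i, j)
      have h := der_algebraMap (R := R) D (MvPolynomial.X (i, j))
      erw [hx] at h
      simp only [hv] at h
      show der D (FracDer.a (MvPolynomial.X (i, j))) = _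
      rw [h]
      simp only [map_sum, map_mul, Matrix.mul_apply, Matrix.map_apply]
      refine Finset.sum_congr rfl fun k _ => ?_
      rw [hKL]
      rfl
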